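/- For every integer q ≥ 1 and ε ∈ ℝ, with H(x, y, z) = ψ_q(x, y) + ε·(y·sin z − x·cos z), the Q-flow vector field v satisfies ι_v(dy ∧ dx ∧ dz) = dα_q: for every point of ℝ³ and all u, w ∈ ℝ³, −det[v, u, w] = ψ_q·(u₂w₁ − u₁w₂) − (⟨∇H, u⟩·w₃ − ⟨∇H, w⟩·u₃), where det[v, u, w] denotes the determinant of the 3×3 matrix with columns v, u, w (so dy ∧ dx ∧ dz = −dx ∧ dy ∧ dz is the chosen volume form). Consequently v preserves the Euclidean volume form. -/

import Mathlib

/-- The stream function of Zaslavsky's Q-flow: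
`ψ_q(x, y) = Σ_{j=1}^{q} cos(x cos(2πj/q) + y sin(2πj/q))`. -/
noncomputable def psi (q : ℕ) (x y : ℝ) : ℝ :=
  ∑ j ∈ Finset.Icc 1 q,
    Real.cos (x * Real.cos (2 * Real.pi * j / q) + y * Real.sin (2 * Real.pi * j / q))

/-- The effective Hamiltonian of the Q-flow:
`H(x, y, z) = ψ_q(x, y) + ε (y sin z − x cos z)`. -/
noncomputable def Qham (q : ℕ) (ε : ℝ) (x y z : ℝ) : ℝ :=
  psi q x y + ε * (y * Real.sin z - x * Real.cos z)

private lemma inner_x (q : ℕ) (j : ℕ) (y x : ℝ) :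
    HasDerivAt (fun s : ℝ => s * Real.cos (2 * Real.pi * j / q) + y * Real.sin (2 * Real.pi * j / q))
      (Real.cos (2 * Real.pi * j / q)) x :=
  (hasDerivAt_mul_const _).add_const _

private lemma inner_y (q : ℕ) (j : ℕ) (x y : ℝ) :
    HasDerivAt (fun t : ℝ => x * Real.cos (2 * Real.pi * j / q) + t * Real.sin (2 * Real.pi * j / q))
      (Real.sin (2 * Real.pi * j / q)) y :=
  (hasDerivAt_mul_const _).const_add _

private lemma psi_x (q : ℕ) (x y : ℝ) :
    HasDerivAt (fun s => psi q s y)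
      (∑ j ∈ Finset.Icc 1 q,
        -Real.sin (x * Real.cos (2 * Real.pi * j / q) + y * Real.sin (2 * Real.pi * j / q)) *
          Real.cos (2 * Real.pi * j / q)) x := by
  unfold psi
  exact HasDerivAt.fun_sum fun j _ =>
    (Real.hasDerivAt_cos _).comp x (inner_x q j y x)

private lemma psi_y (q : ℕ) (x y : ℝ) :
    HasDerivAt (fun t => psi q x t)
      (∑ j ∈ Finset.Icc 1 q,
        -Real.sin (x * Real.cos (2 * Real.pi * j / q) + y * Real.sin (2 * Real.pi * j / q)) *
          Real.sin (2 * Real.pi * j / q)) y := by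
  unfold psi
  exact HasDerivAt.fun_sum fun j _ =>
    (Real.hasDerivAt_cos _).comp y (inner_y q j x y)

/-- With `H(x, y, z) = ψ_q(x, y) + ε (y sin z − x cos z)`, the Q-flow vector
field `v` satisfies `ι_v (dy ∧ dx ∧ dz) = dα_q`: at every point and for all `u, w ∈ ℝ³`,
`−det[v, u, w] = ψ_q (u₂w₁ − u₁w₂) − (⟨∇H, u⟩ w₃ − ⟨∇H, w⟩ u₃)`, where `det[v, u, w]` is the
determinant of the matrix with columns `v, u, w`. Consequently `v` preserves the Euclidean
volume form (it is divergence free). -/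
theorem stmt16 (q : ℕ) (hq : 1 ≤ q) (ε : ℝ) (x y z : ℝ) :
    let Hx := deriv (fun s => Qham q ε s y z) x
    let Hy := deriv (fun s => Qham q ε x s z) y
    let Hz := deriv (fun s => Qham q ε x y s) z
    let v1 := deriv (fun s => psi q x s) y + ε * Real.sin z
    let v2 := -(deriv (fun s => psi q s y) x) + ε * Real.cos z
    let v3 := psi q x y
    (∀ u w : Fin 3 → ℝ,
      -(Matrix.det !![v1, u 0, w 0; v2, u 1, w 1; v3, u 2, w 2])
        = psi q x y * (u 1 * w 0 - u 0 * w 1)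
          - ((Hx * u 0 + Hy * u 1 + Hz * u 2) * w 2
              - (Hx * w 0 + Hy * w 1 + Hz * w 2) * u 2)) ∧
    -- consequently v preserves the Euclidean volume form (divergence zero)
    (deriv (fun x' => deriv (fun y' => psi q x' y') y + ε * Real.sin z) x
      + deriv (fun y' => -(deriv (fun x' => psi q x' y') x) + ε * Real.cos z) y
      + deriv (fun _z' : ℝ => psi q x y) z = 0) := by
  intro Hx Hy Hz v1 v2 v3
  -- closed forms for partial derivatives of psi
  set Px := ∑ j ∈ Finset.Icc 1 q,
      -Real.sin (x * Real.cos (2 * Real.pi * j / q) + y * Real.sin (2 * Real.pi * j / q)) *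
        Real.cos (2 * Real.pi * j / q) with hPx
  set Py := ∑ j ∈ Finset.Icc 1 q,
      -Real.sin (x * Real.cos (2 * Real.pi * j / q) + y * Real.sin (2 * Real.pi * j / q)) *
        Real.sin (2 * Real.pi * j / q) with hPy
  have hpx : deriv (fun s => psi q s y) x = Px := (psi_x q x y).deriv
  have hpy : deriv (fun t => psi q x t) y = Py := (psi_y q x y).deriv
  have hHx : Hx = Px - ε * Real.cos z := by
    have h : HasDerivAt (fun s => Qham q ε s y z) (Px + ε * -Real.cos z) x := by
      unfold Qham
      exact (psi_x q x y).add
        ((((hasDerivAt_mul_const (Real.cos z)).const_sub (y * Real.sin z))).const_mul ε)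
    have := h.deriv
    simp only [Hx, this]; ring
  have hHy : Hy = Py + ε * Real.sin z := by
    have h : HasDerivAt (fun t => Qham q ε x t z) (Py + ε * Real.sin z) y := by
      unfold Qham
      exact (psi_y q x y).add
        ((((hasDerivAt_mul_const (Real.sin z)).sub_const (x * Real.cos z))).const_mul ε)
    have := h.deriv
    simp only [Hy, this]
  constructor
  · intro u w
    simp only [v1, v2, v3, hpx, hpy, hHx, hHy]
    rw [Matrix.det_fin_three]
    norm_num [Matrix.cons_val_zero, Matrix.cons_val_one, Matrix.cons_val_two, Matrix.vecHead, Matrix.vecTail]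
    ring
  · -- divergence
    have h1 : (fun x' => deriv (fun y' => psi q x' y') y + ε * Real.sin z)
        = fun x' => (∑ j ∈ Finset.Icc 1 q,
            -Real.sin (x' * Real.cos (2 * Real.pi * j / q) + y * Real.sin (2 * Real.pi * j / q)) *
              Real.sin (2 * Real.pi * j / q)) + ε * Real.sin z := by
      funext x'
      rw [(psi_y q x' y).deriv]
    have h2 : (fun y' => -(deriv (fun x' => psi q x' y') x) + ε * Real.cos z)
        = fun y' => -(∑ j ∈ Finset.Icc 1 q,
            -Real.sin (x * Real.cos (2 * Real.pi * j / q) + y' * Real.sin (2 * Real.pi * j / q)) *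
              Real.cos (2 * Real.pi * j / q)) + ε * Real.cos z := by
      funext y'
      rw [(psi_x q x y').deriv]
    have d1 : HasDerivAt (fun x' => (∑ j ∈ Finset.Icc 1 q,
            -Real.sin (x' * Real.cos (2 * Real.pi * j / q) + y * Real.sin (2 * Real.pi * j / q)) *
              Real.sin (2 * Real.pi * j / q)) + ε * Real.sin z)
        (∑ j ∈ Finset.Icc 1 q,
          -(Real.cos (x * Real.cos (2 * Real.pi * j / q) + y * Real.sin (2 * Real.pi * j / q)) *
            Real.cos (2 * Real.pi * j / q)) * Real.sin (2 * Real.pi * j / q)) x := by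
      refine (HasDerivAt.fun_sum fun j _ => ?_).add_const _
      exact (((Real.hasDerivAt_sin _).comp x (inner_x q j y x)).neg).mul_const _
    have d2 : HasDerivAt (fun y' => -(∑ j ∈ Finset.Icc 1 q,
            -Real.sin (x * Real.cos (2 * Real.pi * j / q) + y' * Real.sin (2 * Real.pi * j / q)) *
              Real.cos (2 * Real.pi * j / q)) + ε * Real.cos z)
        (-∑ j ∈ Finset.Icc 1 q,
          -(Real.cos (x * Real.cos (2 * Real.pi * j / q) + y * Real.sin (2 * Real.pi * j / q)) *
            Real.sin (2 * Real.pi * j / q)) * Real.cos (2 * Real.pi * j / q)) y := by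
      refine ((HasDerivAt.fun_sum fun j _ => ?_).neg).add_const _
      exact (((Real.hasDerivAt_sin _).comp y (inner_y q j x y)).neg).mul_const _
    rw [h1, h2, d1.deriv, d2.deriv, deriv_const]
    rw [← Finset.sum_neg_distrib, ← Finset.sum_add_distrib]
    rw [Finset.sum_eq_zero fun j _ => by ring]
    ring
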